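/- Let I ⊆ ℝ be an open interval and let v : ℝ² × I → ℝ be smooth and positive with ∂v/∂t = v·Δv − ‖∇v‖² everywhere (∇, Δ Euclidean, in the x variable). Define Q := v·(∂³v/∂z³)·(∂³v/∂z̄³) = v·|∂³v/∂z³|² (a real, nonnegative function) and R := v⁻¹·(v·Δv − ‖∇v‖²). Then at every point of ℝ² × I, ∂Q/∂t ≤ v·ΔQ − 4·R·Q, where ΔQ is the Euclidean Laplacian of Q in the x variable. -/

import Mathlib

/- We identify `ℝ²` with `ℂ` via `(x₁,x₂) ↦ z = x₁ + i x₂`. -/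

/-- Partial derivative of a complex-valued function in the first Euclidean
coordinate. -/
noncomputable def pdx (f : ℂ → ℂ) (z : ℂ) : ℂ :=
  deriv (fun s : ℝ => f (z + (s : ℂ))) 0

/-- Partial derivative of a complex-valued function in the second Euclidean
coordinate. -/
noncomputable def pdy (f : ℂ → ℂ) (z : ℂ) : ℂ :=
  deriv (fun s : ℝ => f (z + (s : ℂ) * Complex.I)) 0

/-- The Wirtinger derivative `∂f/∂z = (1/2)(∂f/∂x₁ − i ∂f/∂x₂)`. -/
noncomputable def wz (f : ℂ → ℂ) : ℂ → ℂ :=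
  fun z => (pdx f z - Complex.I * pdy f z) / 2

/-- The Wirtinger derivative `∂f/∂z̄ = (1/2)(∂f/∂x₁ + i ∂f/∂x₂)`. -/
noncomputable def wzb (f : ℂ → ℂ) : ℂ → ℂ :=
  fun z => (pdx f z + Complex.I * pdy f z) / 2

/-- Partial derivative of a real-valued function in the first Euclidean
coordinate. -/
noncomputable def pdxR (f : ℂ → ℝ) (z : ℂ) : ℝ :=
  deriv (fun s : ℝ => f (z + (s : ℂ))) 0

/-- Partial derivative of a real-valued function in the second Euclidean
coordinate. -/
noncomputable def pdyR (f : ℂ → ℝ) (z : ℂ) : ℝ :=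
  deriv (fun s : ℝ => f (z + (s : ℂ) * Complex.I)) 0

/-- Euclidean Laplacian on `ℝ² ≅ ℂ`. -/
noncomputable def lapR (f : ℂ → ℝ) (z : ℂ) : ℝ :=
  pdxR (pdxR f) z + pdyR (pdyR f) z

/-- Squared Euclidean norm of the gradient on `ℝ² ≅ ℂ`. -/
noncomputable def gradSq (f : ℂ → ℝ) (z : ℂ) : ℝ :=
  (pdxR f z) ^ 2 + (pdyR f z) ^ 2

/-- The Daskalopoulos–Hamilton–Šešum quantity, in its manifestly real form
`Q = v · |∂³v/∂z³|²`, with Wirtinger derivatives taken in the `x` variable. -/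
noncomputable def QrDHS (v : ℂ × ℝ → ℝ) : ℂ × ℝ → ℝ :=
  fun p => v p * Complex.normSq (wz (wz (wz (fun w => (v (w, p.2) : ℂ)))) p.1)

/-- The scalar curvature `R = v⁻¹ (v·Δv − ‖∇v‖²)` of the evolving conformal
metric `v⁻¹ δᵢⱼ`. -/
noncomputable def scalarR (v : ℂ × ℝ → ℝ) : ℂ × ℝ → ℝ :=
  fun p => (v p)⁻¹ * (v p * lapR (fun z => v (z, p.2)) p.1
    - gradSq (fun z => v (z, p.2)) p.1)

open Complex

/-- Directional derivative operator on `ℂ × ℝ`. -/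
noncomputable def DdDHS (e : ℂ × ℝ) (F : ℂ × ℝ → ℂ) (q : ℂ × ℝ) : ℂ := fderiv ℝ F q e

/-- `∂/∂z` on the product space. -/
noncomputable def ZopDHS (F : ℂ × ℝ → ℂ) (q : ℂ × ℝ) : ℂ :=
  (DdDHS (1, 0) F q - Complex.I * DdDHS (Complex.I, 0) F q) / 2

/-- `∂/∂z̄` on the product space. -/
noncomputable def ZbopDHS (F : ℂ × ℝ → ℂ) (q : ℂ × ℝ) : ℂ :=
  (DdDHS (1, 0) F q + Complex.I * DdDHS (Complex.I, 0) F q) / 2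

/-- `∂/∂t` on the product space. -/
noncomputable def TopDHS (F : ℂ × ℝ → ℂ) (q : ℂ × ℝ) : ℂ := DdDHS (0, 1) F q

section basic

variable {U : Set (ℂ × ℝ)} {F G : ℂ × ℝ → ℂ} {q : ℂ × ℝ}

lemma contDiffAt_of_on (hU : IsOpen U) (hF : ContDiffOn ℝ (⊤ : ℕ∞) F U) (hq : q ∈ U) :
    ContDiffAt ℝ (⊤ : ℕ∞) F q := hF.contDiffAt (hU.mem_nhds hq)

lemma diffAt_of_on (hU : IsOpen U) (hF : ContDiffOn ℝ (⊤ : ℕ∞) F U) (hq : q ∈ U) :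
    DifferentiableAt ℝ F q :=
  (contDiffAt_of_on hU hF hq).differentiableAt (by simp)

lemma sm_Dd (hU : IsOpen U) (hF : ContDiffOn ℝ (⊤ : ℕ∞) F U) (e : ℂ × ℝ) :
    ContDiffOn ℝ (⊤ : ℕ∞) (DdDHS e F) U :=
  (hF.fderiv_of_isOpen hU (by exact_mod_cast le_top)).clm_apply contDiffOn_const

lemma Dd_congr (hU : IsOpen U) (h : ∀ x ∈ U, F x = G x) (hq : q ∈ U) (e : ℂ × ℝ) :
    DdDHS e F q = DdDHS e G q := by
  unfold DdDHS
  rw [Filter.EventuallyEq.fderiv_eq (Filter.eventuallyEq_of_mem (hU.mem_nhds hq) h)]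

lemma Dd_add (hF : DifferentiableAt ℝ F q) (hG : DifferentiableAt ℝ G q) (e : ℂ × ℝ) :
    DdDHS e (fun x => F x + G x) q = DdDHS e F q + DdDHS e G q := by
  unfold DdDHS; rw [fderiv_fun_add hF hG]; rfl

lemma Dd_sub (hF : DifferentiableAt ℝ F q) (hG : DifferentiableAt ℝ G q) (e : ℂ × ℝ) :
    DdDHS e (fun x => F x - G x) q = DdDHS e F q - DdDHS e G q := by
  unfold DdDHS; rw [fderiv_fun_sub hF hG]; rfl

lemma Dd_const_mul (hF : DifferentiableAt ℝ F q) (c : ℂ) (e : ℂ × ℝ) :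
    DdDHS e (fun x => c * F x) q = c * DdDHS e F q := by
  unfold DdDHS; rw [fderiv_const_mul hF c]; rfl

lemma Dd_div_const (hF : DifferentiableAt ℝ F q) (c : ℂ) (e : ℂ × ℝ) :
    DdDHS e (fun x => F x / c) q = DdDHS e F q / c := by
  simp only [div_eq_inv_mul]
  exact Dd_const_mul hF c⁻¹ e

lemma Dd_mul (hF : DifferentiableAt ℝ F q) (hG : DifferentiableAt ℝ G q) (e : ℂ × ℝ) :
    DdDHS e (fun x => F x * G x) q = DdDHS e F q * G q + F q * DdDHS e G q := by
  unfold DdDHS; rw [fderiv_fun_mul hF hG]; simp [mul_comm]; ring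

lemma Dd_conj (e : ℂ × ℝ) (F : ℂ × ℝ → ℂ) (q : ℂ × ℝ) :
    DdDHS e (fun x => starRingEnd ℂ (F x)) q = starRingEnd ℂ (DdDHS e F q) := by
  unfold DdDHS
  have : (fun x => starRingEnd ℂ (F x)) = (Complex.conjCLE : ℂ ≃L[ℝ] ℂ) ∘ F := rfl
  rw [this, Complex.conjCLE.comp_fderiv]
  rfl

end basic

lemma Dd_comm (hU : IsOpen U) (hF : ContDiffOn ℝ (⊤ : ℕ∞) F U) (hq : q ∈ U) (e₁ e₂ : ℂ × ℝ) :
    DdDHS e₁ (DdDHS e₂ F) q = DdDHS e₂ (DdDHS e₁ F) q := by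
  have hFq : ContDiffAt ℝ (⊤ : ℕ∞) F q := hF.contDiffAt (hU.mem_nhds hq)
  have hsymm : IsSymmSndFDerivAt ℝ F q :=
    hFq.isSymmSndFDerivAt (by rw [show ((2:WithTop ℕ∞)) = ((2:ℕ∞) : WithTop ℕ∞) by norm_cast]; rw [minSmoothness_of_isRCLikeNormedField]; exact WithTop.coe_le_coe.mpr le_top)
  have hd : ContDiffAt ℝ (⊤ : ℕ∞) (fderiv ℝ F) q :=
    hFq.fderiv_right (by exact_mod_cast le_top)
  have hdd : DifferentiableAt ℝ (fderiv ℝ F) q :=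
    hd.differentiableAt (by simp)
  have key : ∀ a b : ℂ × ℝ, DdDHS a (DdDHS b F) q = fderiv ℝ (fderiv ℝ F) q a b := by
    intro a b
    show fderiv ℝ (fun y => (fderiv ℝ F y) b) q a = _
    rw [fderiv_clm_apply hdd (differentiableAt_const b)]
    simp
  rw [key, key, hsymm e₁ e₂]

section ops
variable {U : Set (ℂ × ℝ)} {F G : ℂ × ℝ → ℂ} {q : ℂ × ℝ}

lemma sm_Z (hU : IsOpen U) (hF : ContDiffOn ℝ (⊤ : ℕ∞) F U) :
    ContDiffOn ℝ (⊤ : ℕ∞) (ZopDHS F) U :=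
  ((sm_Dd hU hF (1,0)).sub (contDiffOn_const.mul (sm_Dd hU hF (Complex.I,0)))).div_const 2

lemma sm_Zb (hU : IsOpen U) (hF : ContDiffOn ℝ (⊤ : ℕ∞) F U) :
    ContDiffOn ℝ (⊤ : ℕ∞) (ZbopDHS F) U :=
  ((sm_Dd hU hF (1,0)).add (contDiffOn_const.mul (sm_Dd hU hF (Complex.I,0)))).div_const 2

lemma sm_T (hU : IsOpen U) (hF : ContDiffOn ℝ (⊤ : ℕ∞) F U) :
    ContDiffOn ℝ (⊤ : ℕ∞) (TopDHS F) U := sm_Dd hU hF (0,1)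

lemma Z_congr (hU : IsOpen U) (h : ∀ x ∈ U, F x = G x) (hq : q ∈ U) :
    ZopDHS F q = ZopDHS G q := by
  unfold ZopDHS; rw [Dd_congr hU h hq, Dd_congr hU h hq]

lemma Zb_congr (hU : IsOpen U) (h : ∀ x ∈ U, F x = G x) (hq : q ∈ U) :
    ZbopDHS F q = ZbopDHS G q := by
  unfold ZbopDHS; rw [Dd_congr hU h hq, Dd_congr hU h hq]

lemma Z_mul (hF : DifferentiableAt ℝ F q) (hG : DifferentiableAt ℝ G q) :
    ZopDHS (fun x => F x * G x) q = ZopDHS F q * G q + F q * ZopDHS G q := by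
  unfold ZopDHS; rw [Dd_mul hF hG, Dd_mul hF hG]; ring

lemma Zb_mul (hF : DifferentiableAt ℝ F q) (hG : DifferentiableAt ℝ G q) :
    ZbopDHS (fun x => F x * G x) q = ZbopDHS F q * G q + F q * ZbopDHS G q := by
  unfold ZbopDHS; rw [Dd_mul hF hG, Dd_mul hF hG]; ring

lemma T_mul (hF : DifferentiableAt ℝ F q) (hG : DifferentiableAt ℝ G q) :
    TopDHS (fun x => F x * G x) q = TopDHS F q * G q + F q * TopDHS G q := by
  unfold TopDHS; rw [Dd_mul hF hG]

lemma Z_sub (hF : DifferentiableAt ℝ F q) (hG : DifferentiableAt ℝ G q) :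
    ZopDHS (fun x => F x - G x) q = ZopDHS F q - ZopDHS G q := by
  unfold ZopDHS; rw [Dd_sub hF hG, Dd_sub hF hG]; ring

lemma Z_add (hF : DifferentiableAt ℝ F q) (hG : DifferentiableAt ℝ G q) :
    ZopDHS (fun x => F x + G x) q = ZopDHS F q + ZopDHS G q := by
  unfold ZopDHS; rw [Dd_add hF hG, Dd_add hF hG]; ring

lemma Z_const_mul (hF : DifferentiableAt ℝ F q) (c : ℂ) :
    ZopDHS (fun x => c * F x) q = c * ZopDHS F q := by
  unfold ZopDHS; rw [Dd_const_mul hF, Dd_const_mul hF]; ring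

lemma conj_Zop (F : ℂ × ℝ → ℂ) (q : ℂ × ℝ) :
    starRingEnd ℂ (ZopDHS F q) = ZbopDHS (fun y => starRingEnd ℂ (F y)) q := by
  unfold ZopDHS ZbopDHS
  rw [Dd_conj, Dd_conj]
  rw [map_div₀, map_sub, map_mul, Complex.conj_I]
  push_cast [map_ofNat]
  ring

lemma conj_Zbop (F : ℂ × ℝ → ℂ) (q : ℂ × ℝ) :
    starRingEnd ℂ (ZbopDHS F q) = ZopDHS (fun y => starRingEnd ℂ (F y)) q := by
  unfold ZopDHS ZbopDHS
  rw [Dd_conj, Dd_conj]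
  rw [map_div₀, map_add, map_mul, Complex.conj_I]
  push_cast [map_ofNat]
  ring

lemma conj_Top (F : ℂ × ℝ → ℂ) (q : ℂ × ℝ) :
    starRingEnd ℂ (TopDHS F q) = TopDHS (fun y => starRingEnd ℂ (F y)) q := by
  unfold TopDHS; rw [Dd_conj]

lemma dd_Zop (hU : IsOpen U) (hF : ContDiffOn ℝ (⊤ : ℕ∞) F U) (hq : q ∈ U) (e : ℂ × ℝ) :
    DdDHS e (ZopDHS F) q
      = (DdDHS e (DdDHS (1,0) F) q - Complex.I * DdDHS e (DdDHS (Complex.I,0) F) q) / 2 := by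
  have h1 : DifferentiableAt ℝ (DdDHS (1,0) F) q := diffAt_of_on hU (sm_Dd hU hF _) hq
  have h2 : DifferentiableAt ℝ (DdDHS (Complex.I,0) F) q := diffAt_of_on hU (sm_Dd hU hF _) hq
  show DdDHS e (fun x => (DdDHS (1,0) F x - Complex.I * DdDHS (Complex.I,0) F x) / 2) q = _
  rw [Dd_div_const (h1.fun_sub (h2.const_mul _)), Dd_sub h1 (h2.const_mul _), Dd_const_mul h2]

lemma dd_Zbop (hU : IsOpen U) (hF : ContDiffOn ℝ (⊤ : ℕ∞) F U) (hq : q ∈ U) (e : ℂ × ℝ) :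
    DdDHS e (ZbopDHS F) q
      = (DdDHS e (DdDHS (1,0) F) q + Complex.I * DdDHS e (DdDHS (Complex.I,0) F) q) / 2 := by
  have h1 : DifferentiableAt ℝ (DdDHS (1,0) F) q := diffAt_of_on hU (sm_Dd hU hF _) hq
  have h2 : DifferentiableAt ℝ (DdDHS (Complex.I,0) F) q := diffAt_of_on hU (sm_Dd hU hF _) hq
  show DdDHS e (fun x => (DdDHS (1,0) F x + Complex.I * DdDHS (Complex.I,0) F x) / 2) q = _
  rw [Dd_div_const (h1.fun_add (h2.const_mul _)), Dd_add h1 (h2.const_mul _), Dd_const_mul h2]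

lemma ZZb_comm (hU : IsOpen U) (hF : ContDiffOn ℝ (⊤ : ℕ∞) F U) (hq : q ∈ U) :
    ZopDHS (ZbopDHS F) q = ZbopDHS (ZopDHS F) q := by
  show (DdDHS (1,0) (ZbopDHS F) q - Complex.I * DdDHS (Complex.I,0) (ZbopDHS F) q) / 2
      = (DdDHS (1,0) (ZopDHS F) q + Complex.I * DdDHS (Complex.I,0) (ZopDHS F) q) / 2
  rw [dd_Zbop hU hF hq, dd_Zbop hU hF hq, dd_Zop hU hF hq, dd_Zop hU hF hq,
    Dd_comm hU hF hq (1,0) (Complex.I,0)]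
  ring

lemma TZ_comm (hU : IsOpen U) (hF : ContDiffOn ℝ (⊤ : ℕ∞) F U) (hq : q ∈ U) :
    TopDHS (ZopDHS F) q = ZopDHS (TopDHS F) q := by
  show DdDHS (0,1) (ZopDHS F) q
      = (DdDHS (1,0) (TopDHS F) q - Complex.I * DdDHS (Complex.I,0) (TopDHS F) q) / 2
  rw [dd_Zop hU hF hq]
  show _ = (DdDHS (1,0) (DdDHS (0,1) F) q - Complex.I * DdDHS (Complex.I,0) (DdDHS (0,1) F) q) / 2
  rw [Dd_comm hU hF hq (0,1) (1,0), Dd_comm hU hF hq (0,1) (Complex.I,0)]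

end ops
section slice

variable {E : Type*} [NormedAddCommGroup E] [NormedSpace ℝ E]

lemma hasDerivAt_slice_x (G : ℂ × ℝ → E) {z : ℂ} {t : ℝ} (h : DifferentiableAt ℝ G (z, t)) :
    HasDerivAt (fun s : ℝ => G (z + (s : ℂ), t)) (fderiv ℝ G (z, t) (1, 0)) 0 := by
  have h1 : HasDerivAt (fun s : ℝ => z + (s : ℂ)) 1 0 := by
    simpa using (Complex.ofRealCLM.hasDerivAt (x := (0 : ℝ))).const_add z
  have hc : HasDerivAt (fun s : ℝ => ((z + (s : ℂ), t) : ℂ × ℝ)) ((1 : ℂ), (0 : ℝ)) 0 :=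
    h1.prodMk (hasDerivAt_const 0 t)
  have h' : HasFDerivAt G (fderiv ℝ G (z, t)) (z + ((0 : ℝ) : ℂ), t) := by
    simpa using h.hasFDerivAt
  exact h'.comp_hasDerivAt 0 hc

lemma hasDerivAt_slice_y (G : ℂ × ℝ → E) {z : ℂ} {t : ℝ} (h : DifferentiableAt ℝ G (z, t)) :
    HasDerivAt (fun s : ℝ => G (z + (s : ℂ) * Complex.I, t))
      (fderiv ℝ G (z, t) (Complex.I, 0)) 0 := by
  have h1 : HasDerivAt (fun s : ℝ => z + (s : ℂ) * Complex.I) Complex.I 0 := by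
    simpa using ((Complex.ofRealCLM.hasDerivAt (x := (0 : ℝ))).mul_const Complex.I).const_add z
  have hc : HasDerivAt (fun s : ℝ => ((z + (s : ℂ) * Complex.I, t) : ℂ × ℝ))
      ((Complex.I : ℂ), (0 : ℝ)) 0 := h1.prodMk (hasDerivAt_const 0 t)
  have h' : HasFDerivAt G (fderiv ℝ G (z, t)) (z + ((0 : ℝ) : ℂ) * Complex.I, t) := by
    simpa using h.hasFDerivAt
  exact h'.comp_hasDerivAt 0 hc

lemma hasDerivAt_slice_t (G : ℂ × ℝ → E) {z : ℂ} {t : ℝ} (h : DifferentiableAt ℝ G (z, t)) :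
    HasDerivAt (fun s : ℝ => G (z, s)) (fderiv ℝ G (z, t) (0, 1)) t := by
  have hc : HasDerivAt (fun s : ℝ => ((z, s) : ℂ × ℝ)) ((0 : ℂ), (1 : ℝ)) t :=
    (hasDerivAt_const t z).prodMk (hasDerivAt_id t)
  exact h.hasFDerivAt.comp_hasDerivAt t hc

lemma pdx_slice (G : ℂ × ℝ → ℂ) {z : ℂ} {t : ℝ} (h : DifferentiableAt ℝ G (z, t)) :
    pdx (fun w => G (w, t)) z = DdDHS (1, 0) G (z, t) := (hasDerivAt_slice_x G h).deriv

lemma pdy_slice (G : ℂ × ℝ → ℂ) {z : ℂ} {t : ℝ} (h : DifferentiableAt ℝ G (z, t)) :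
    pdy (fun w => G (w, t)) z = DdDHS (Complex.I, 0) G (z, t) := (hasDerivAt_slice_y G h).deriv

lemma wz_slice (G : ℂ × ℝ → ℂ) {z : ℂ} {t : ℝ} (h : DifferentiableAt ℝ G (z, t)) :
    wz (fun w => G (w, t)) z = ZopDHS G (z, t) := by
  unfold wz ZopDHS
  rw [pdx_slice G h, pdy_slice G h]

lemma wzb_slice (G : ℂ × ℝ → ℂ) {z : ℂ} {t : ℝ} (h : DifferentiableAt ℝ G (z, t)) :
    wzb (fun w => G (w, t)) z = ZbopDHS G (z, t) := by
  unfold wzb ZbopDHS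
  rw [pdx_slice G h, pdy_slice G h]

lemma pdxR_slice (g : ℂ × ℝ → ℝ) {z : ℂ} {t : ℝ} (h : DifferentiableAt ℝ g (z, t)) :
    pdxR (fun w => g (w, t)) z = fderiv ℝ g (z, t) (1, 0) := (hasDerivAt_slice_x g h).deriv

lemma pdyR_slice (g : ℂ × ℝ → ℝ) {z : ℂ} {t : ℝ} (h : DifferentiableAt ℝ g (z, t)) :
    pdyR (fun w => g (w, t)) z = fderiv ℝ g (z, t) (Complex.I, 0) := (hasDerivAt_slice_y g h).deriv

/-- unconditional: `Dd` of a complexified real function is the complexified `fderiv`. -/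
lemma Dd_ofReal (g : ℂ × ℝ → ℝ) (x : ℂ × ℝ) (e : ℂ × ℝ) :
    DdDHS e (fun y => ((g y : ℝ) : ℂ)) x = ((fderiv ℝ g x e : ℝ) : ℂ) := by
  by_cases h : DifferentiableAt ℝ g x
  · have : HasFDerivAt (fun y => ((g y : ℝ) : ℂ))
        (Complex.ofRealCLM.comp (fderiv ℝ g x)) x :=
      Complex.ofRealCLM.hasFDerivAt.comp x h.hasFDerivAt
    unfold DdDHS
    rw [this.fderiv]
    rfl
  · have h2 : ¬ DifferentiableAt ℝ (fun y => ((g y : ℝ) : ℂ)) x := by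
      intro hc
      exact h ((Complex.reCLM.differentiableAt.comp x hc).congr_of_eventuallyEq (Filter.Eventually.of_forall fun y => by simp))
    unfold DdDHS
    rw [fderiv_zero_of_not_differentiableAt h, fderiv_zero_of_not_differentiableAt h2]
    simp

end slice
noncomputable def W3DHS (V : ℂ × ℝ → ℂ) : ℂ × ℝ → ℂ := ZopDHS (ZopDHS (ZopDHS V))

noncomputable def QcDHS (V : ℂ × ℝ → ℂ) : ℂ × ℝ → ℂ :=
  fun x => V x * W3DHS V x * starRingEnd ℂ (W3DHS V x)

section master

variable {U : Set (ℂ × ℝ)} {V : ℂ × ℝ → ℂ} {q : ℂ × ℝ}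

lemma master_identity (hU : IsOpen U) (hV : ContDiffOn ℝ (⊤ : ℕ∞) V U)
    (hVconj : ∀ x, starRingEnd ℂ (V x) = V x)
    (hflow : ∀ x ∈ U, TopDHS V x
        = 4 * (V x * ZopDHS (ZbopDHS V) x - ZopDHS V x * ZbopDHS V x))
    (hq : q ∈ U) :
    ∃ X Y : ℂ,
      V q * TopDHS (QcDHS V) q
        = 4 * (V q) ^ 2 * ZopDHS (ZbopDHS (QcDHS V)) q
          - 16 * (V q * ZopDHS (ZbopDHS V) q - ZopDHS V q * ZbopDHS V q) * QcDHS V q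
          - 4 * V q * (X * starRingEnd ℂ X + Y * starRingEnd ℂ Y) := by
  -- differentiability helper
  have d : ∀ {F : ℂ × ℝ → ℂ} (_ : ContDiffOn ℝ (⊤ : ℕ∞) F U) {x : ℂ × ℝ} (_ : x ∈ U),
      DifferentiableAt ℝ F x := by
    intro F hF x hx; exact diffAt_of_on hU hF hx
  -- smoothness of the jet functions
  have sV1 : ContDiffOn ℝ (⊤ : ℕ∞) (ZopDHS V) U := sm_Z hU hV
  have sV1b : ContDiffOn ℝ (⊤ : ℕ∞) (ZbopDHS V) U := sm_Zb hU hV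
  have sV2 : ContDiffOn ℝ (⊤ : ℕ∞) (ZopDHS (ZopDHS V)) U := sm_Z hU sV1
  have sC : ContDiffOn ℝ (⊤ : ℕ∞) (ZbopDHS (ZopDHS V)) U := sm_Zb hU sV1
  have sK : ContDiffOn ℝ (⊤ : ℕ∞) (ZbopDHS (ZopDHS (ZopDHS V))) U := sm_Zb hU sV2
  have sK2 : ContDiffOn ℝ (⊤ : ℕ∞) (ZopDHS (ZbopDHS (ZopDHS (ZopDHS V)))) U := sm_Z hU sK
  have sW : ContDiffOn ℝ (⊤ : ℕ∞) (W3DHS V) U := sm_Z hU sV2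
  have sW1 : ContDiffOn ℝ (⊤ : ℕ∞) (ZopDHS (W3DHS V)) U := sm_Z hU sW
  have sW1b : ContDiffOn ℝ (⊤ : ℕ∞) (ZbopDHS (W3DHS V)) U := sm_Zb hU sW
  have sTV : ContDiffOn ℝ (⊤ : ℕ∞) (TopDHS V) U := sm_T hU hV
  have sTV1 : ContDiffOn ℝ (⊤ : ℕ∞) (ZopDHS (TopDHS V)) U := sm_Z hU sTV
  have sTV2 : ContDiffOn ℝ (⊤ : ℕ∞) (ZopDHS (ZopDHS (TopDHS V))) U := sm_Z hU sTV1
  -- the flow in terms of `C = v_zz̄`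
  have hflowC : ∀ x ∈ U, TopDHS V x
      = 4 * (V x * ZbopDHS (ZopDHS V) x - ZopDHS V x * ZbopDHS V x) := by
    intro x hx
    rw [hflow x hx, ZZb_comm hU hV hx]
  -- ∂z of the flow RHS (divided by 4)
  have hS1 : ∀ x ∈ U, ZopDHS (fun y => V y * ZbopDHS (ZopDHS V) y - ZopDHS V y * ZbopDHS V y) x
      = V x * ZbopDHS (ZopDHS (ZopDHS V)) x - ZopDHS (ZopDHS V) x * ZbopDHS V x := by
    intro x hx
    rw [Z_sub ((d hV hx).fun_mul (d sC hx)) ((d sV1 hx).fun_mul (d sV1b hx)),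
      Z_mul (d hV hx) (d sC hx), Z_mul (d sV1 hx) (d sV1b hx)]
    have h1 : ZopDHS (ZbopDHS (ZopDHS V)) x = ZbopDHS (ZopDHS (ZopDHS V)) x :=
      ZZb_comm hU sV1 hx
    have h2 : ZopDHS (ZbopDHS V) x = ZbopDHS (ZopDHS V) x := ZZb_comm hU hV hx
    rw [h1, h2]; ring
  -- ∂z² of the flow RHS (divided by 4)
  have hS2 : ∀ x ∈ U, ZopDHS (fun y => V y * ZbopDHS (ZopDHS (ZopDHS V)) y
        - ZopDHS (ZopDHS V) y * ZbopDHS V y) x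
      = ZopDHS V x * ZbopDHS (ZopDHS (ZopDHS V)) x
        + V x * ZopDHS (ZbopDHS (ZopDHS (ZopDHS V))) x
        - W3DHS V x * ZbopDHS V x
        - ZopDHS (ZopDHS V) x * ZbopDHS (ZopDHS V) x := by
    intro x hx
    rw [Z_sub ((d hV hx).fun_mul (d sK hx)) ((d sV2 hx).fun_mul (d sV1b hx)),
      Z_mul (d hV hx) (d sK hx), Z_mul (d sV2 hx) (d sV1b hx)]
    have h2 : ZopDHS (ZbopDHS V) x = ZbopDHS (ZopDHS V) x := ZZb_comm hU hV hx
    rw [h2]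
    show _ = _ + _ - W3DHS V x * _ - _
    unfold W3DHS
    ring
  -- ∂z³ of the flow RHS (divided by 4)
  have hS3 : ∀ x ∈ U, ZopDHS (fun y =>
        ZopDHS V y * ZbopDHS (ZopDHS (ZopDHS V)) y
        + V y * ZopDHS (ZbopDHS (ZopDHS (ZopDHS V))) y
        - W3DHS V y * ZbopDHS V y
        - ZopDHS (ZopDHS V) y * ZbopDHS (ZopDHS V) y) x
      = 2 * ZopDHS V x * ZopDHS (ZbopDHS (ZopDHS (ZopDHS V))) x
        + V x * ZopDHS (ZopDHS (ZbopDHS (ZopDHS (ZopDHS V)))) x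
        - ZopDHS (W3DHS V) x * ZbopDHS V x
        - 2 * W3DHS V x * ZbopDHS (ZopDHS V) x := by
    intro x hx
    have dW : DifferentiableAt ℝ (W3DHS V) x := d sW hx
    rw [Z_sub (((((d sV1 hx).fun_mul (d sK hx))).fun_add ((d hV hx).fun_mul (d sK2 hx))).fun_sub
        (dW.fun_mul (d sV1b hx))) ((d sV2 hx).fun_mul (d sC hx)),
      Z_sub ((((d sV1 hx).fun_mul (d sK hx))).fun_add ((d hV hx).fun_mul (d sK2 hx)))
        (dW.fun_mul (d sV1b hx)),
      Z_add ((d sV1 hx).fun_mul (d sK hx)) ((d hV hx).fun_mul (d sK2 hx)),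
      Z_mul (d sV1 hx) (d sK hx), Z_mul (d hV hx) (d sK2 hx),
      Z_mul dW (d sV1b hx), Z_mul (d sV2 hx) (d sC hx)]
    have h2 : ZopDHS (ZbopDHS V) x = ZbopDHS (ZopDHS V) x := ZZb_comm hU hV hx
    have h3 : ZopDHS (ZbopDHS (ZopDHS V)) x = ZbopDHS (ZopDHS (ZopDHS V)) x :=
      ZZb_comm hU sV1 hx
    rw [h2, h3]
    show _ = _
    unfold W3DHS
    ring
  -- push ∂t through the three ∂z's
  have hn1 : ∀ x ∈ U, ZopDHS (TopDHS V) x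
      = 4 * (V x * ZbopDHS (ZopDHS (ZopDHS V)) x - ZopDHS (ZopDHS V) x * ZbopDHS V x) := by
    intro x hx
    rw [Z_congr hU hflowC hx,
      Z_const_mul (((d hV hx).fun_mul (d sC hx)).fun_sub ((d sV1 hx).fun_mul (d sV1b hx))) 4, hS1 x hx]
  have hn2 : ∀ x ∈ U, ZopDHS (ZopDHS (TopDHS V)) x
      = 4 * (ZopDHS V x * ZbopDHS (ZopDHS (ZopDHS V)) x
        + V x * ZopDHS (ZbopDHS (ZopDHS (ZopDHS V))) x
        - W3DHS V x * ZbopDHS V x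
        - ZopDHS (ZopDHS V) x * ZbopDHS (ZopDHS V) x) := by
    intro x hx
    rw [Z_congr hU hn1 hx,
      Z_const_mul (((d hV hx).fun_mul (d sK hx)).fun_sub ((d sV2 hx).fun_mul (d sV1b hx))) 4, hS2 x hx]
  have hn3 : ∀ x ∈ U, ZopDHS (ZopDHS (ZopDHS (TopDHS V))) x
      = 4 * (2 * ZopDHS V x * ZopDHS (ZbopDHS (ZopDHS (ZopDHS V))) x
        + V x * ZopDHS (ZopDHS (ZbopDHS (ZopDHS (ZopDHS V)))) x
        - ZopDHS (W3DHS V) x * ZbopDHS V x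
        - 2 * W3DHS V x * ZbopDHS (ZopDHS V) x) := by
    intro x hx
    rw [Z_congr hU hn2 hx,
      Z_const_mul (((((d sV1 hx).fun_mul (d sK hx)).fun_add ((d hV hx).fun_mul (d sK2 hx))).fun_sub
        ((d sW hx).fun_mul (d sV1b hx))).fun_sub ((d sV2 hx).fun_mul (d sC hx))) 4, hS3 x hx]
  -- commute ∂t with ∂z³
  have c3 : ∀ x ∈ U, TopDHS (ZopDHS V) x = ZopDHS (TopDHS V) x := fun x hx => TZ_comm hU hV hx
  have c2 : ∀ x ∈ U, TopDHS (ZopDHS (ZopDHS V)) x = ZopDHS (ZopDHS (TopDHS V)) x :=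
    fun x hx => (TZ_comm hU sV1 hx).trans (Z_congr hU c3 hx)
  have c1 : ∀ x ∈ U, TopDHS (W3DHS V) x = ZopDHS (ZopDHS (ZopDHS (TopDHS V))) x :=
    fun x hx => (TZ_comm hU sV2 hx).trans (Z_congr hU c2 hx)
  -- identify the fourth/fifth order jets
  have hK2W : ∀ x ∈ U, ZopDHS (ZbopDHS (ZopDHS (ZopDHS V))) x = ZbopDHS (W3DHS V) x :=
    fun x hx => ZZb_comm hU sV2 hx
  have hK3E : ∀ x ∈ U, ZopDHS (ZopDHS (ZbopDHS (ZopDHS (ZopDHS V)))) x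
      = ZbopDHS (ZopDHS (W3DHS V)) x :=
    fun x hx => (Z_congr hU hK2W hx).trans (ZZb_comm hU sW hx)
  -- evolution of w = v_zzz
  have hTopW : ∀ x ∈ U, TopDHS (W3DHS V) x
      = 4 * (2 * ZopDHS V x * ZbopDHS (W3DHS V) x
        + V x * ZbopDHS (ZopDHS (W3DHS V)) x
        - ZopDHS (W3DHS V) x * ZbopDHS V x
        - 2 * W3DHS V x * ZbopDHS (ZopDHS V) x) := by
    intro x hx
    rw [c1 x hx, hn3 x hx, hK2W x hx, hK3E x hx]
  -- conjugation facts
  have hcV : (fun y => starRingEnd ℂ (V y)) = V := funext hVconj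
  have hconjV1 : ∀ x, starRingEnd ℂ (ZopDHS V x) = ZbopDHS V x := by
    intro x; rw [conj_Zop, hcV]
  have hconjV1b : ∀ x, starRingEnd ℂ (ZbopDHS V x) = ZopDHS V x := by
    intro x; rw [conj_Zbop, hcV]
  have hconjC : ∀ x ∈ U, starRingEnd ℂ (ZbopDHS (ZopDHS V) x) = ZbopDHS (ZopDHS V) x := by
    intro x hx
    rw [conj_Zbop, show (fun y => starRingEnd ℂ (ZopDHS V y)) = ZbopDHS V from funext hconjV1]
    exact ZZb_comm hU hV hx
  -- differentiability of conjugated jets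
  have sWb : ContDiffOn ℝ (⊤ : ℕ∞) (fun y => starRingEnd ℂ (W3DHS V y)) U := by
    have := sW.continuousLinearMap_comp (Complex.conjCLE : ℂ →L[ℝ] ℂ)
    convert this using 2; rfl
  have sW1conj : ContDiffOn ℝ (⊤ : ℕ∞) (fun y => starRingEnd ℂ (ZopDHS (W3DHS V) y)) U := by
    have := sW1.continuousLinearMap_comp (Complex.conjCLE : ℂ →L[ℝ] ℂ)
    convert this using 2; rfl
  -- expansion of ∂z̄ Q
  have hZbQc : ∀ x ∈ U, ZbopDHS (QcDHS V) x
      = ZbopDHS V x * W3DHS V x * starRingEnd ℂ (W3DHS V x)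
        + V x * ZbopDHS (W3DHS V) x * starRingEnd ℂ (W3DHS V x)
        + V x * W3DHS V x * starRingEnd ℂ (ZopDHS (W3DHS V) x) := by
    intro x hx
    show ZbopDHS (fun y => V y * W3DHS V y * starRingEnd ℂ (W3DHS V y)) x = _
    rw [Zb_mul ((d hV hx).fun_mul (d sW hx)) (d sWb hx), Zb_mul (d hV hx) (d sW hx),
      ← conj_Zop (W3DHS V) x]
    ring
  -- expansion of ∂z ∂z̄ Q at q
  have hZZbQc : ZopDHS (ZbopDHS (QcDHS V)) q
      = ZbopDHS (ZopDHS V) q * W3DHS V q * starRingEnd ℂ (W3DHS V q)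
        + ZbopDHS V q * ZopDHS (W3DHS V) q * starRingEnd ℂ (W3DHS V q)
        + ZbopDHS V q * W3DHS V q * starRingEnd ℂ (ZbopDHS (W3DHS V) q)
        + ZopDHS V q * ZbopDHS (W3DHS V) q * starRingEnd ℂ (W3DHS V q)
        + V q * ZbopDHS (ZopDHS (W3DHS V)) q * starRingEnd ℂ (W3DHS V q)
        + V q * ZbopDHS (W3DHS V) q * starRingEnd ℂ (ZbopDHS (W3DHS V) q)
        + ZopDHS V q * W3DHS V q * starRingEnd ℂ (ZopDHS (W3DHS V) q)
        + V q * ZopDHS (W3DHS V) q * starRingEnd ℂ (ZopDHS (W3DHS V) q)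
        + V q * W3DHS V q * starRingEnd ℂ (ZbopDHS (ZopDHS (W3DHS V)) q) := by
    rw [Z_congr hU hZbQc hq]
    rw [Z_add ((((d sV1b hq).fun_mul (d sW hq)).fun_mul (d sWb hq)).fun_add
        (((d hV hq).fun_mul (d sW1b hq)).fun_mul (d sWb hq)))
      (((d hV hq).fun_mul (d sW hq)).fun_mul (d sW1conj hq)),
      Z_add (((d sV1b hq).fun_mul (d sW hq)).fun_mul (d sWb hq))
        (((d hV hq).fun_mul (d sW1b hq)).fun_mul (d sWb hq)),
      Z_mul ((d sV1b hq).fun_mul (d sW hq)) (d sWb hq), Z_mul (d sV1b hq) (d sW hq),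
      Z_mul ((d hV hq).fun_mul (d sW1b hq)) (d sWb hq), Z_mul (d hV hq) (d sW1b hq),
      Z_mul ((d hV hq).fun_mul (d sW hq)) (d sW1conj hq), Z_mul (d hV hq) (d sW hq),
      ← conj_Zbop (W3DHS V) q, ← conj_Zbop (ZopDHS (W3DHS V)) q,
      ZZb_comm hU hV hq, ZZb_comm hU sW hq]
    ring
  -- expansion of ∂t Q at q
  have hTopQc : TopDHS (QcDHS V) q
      = (TopDHS V q * W3DHS V q + V q * TopDHS (W3DHS V) q) * starRingEnd ℂ (W3DHS V q)
        + V q * W3DHS V q * starRingEnd ℂ (TopDHS (W3DHS V) q) := by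
    show TopDHS (fun y => V y * W3DHS V y * starRingEnd ℂ (W3DHS V y)) q = _
    rw [T_mul ((d hV hq).fun_mul (d sW hq)) (d sWb hq), T_mul (d hV hq) (d sW hq),
      ← conj_Top (W3DHS V) q]
    try ring
  refine ⟨V q * ZopDHS (W3DHS V) q + 2 * ZopDHS V q * W3DHS V q,
    V q * ZbopDHS (W3DHS V) q - ZbopDHS V q * W3DHS V q, ?_⟩
  rw [hTopQc, hZZbQc, hflowC q hq, hTopW q hq, ZZb_comm hU hV hq]
  show V q * _ = _ - _ * (V q * W3DHS V q * starRingEnd ℂ (W3DHS V q)) - _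
  simp only [map_mul, map_add, map_sub, map_ofNat, hVconj, hconjV1, hconjV1b, hconjC q hq]
  ring

end master
section translation

variable {U : Set (ℂ × ℝ)}

lemma grad_slice (hU : IsOpen U) (g : ℂ × ℝ → ℝ)
    (hGc : ContDiffOn ℝ (⊤ : ℕ∞) (fun y => ((g y : ℝ) : ℂ)) U) {z : ℂ} {t : ℝ}
    (hq : (z, t) ∈ U) :
    ((gradSq (fun w => g (w, t)) z : ℝ) : ℂ)
      = 4 * (ZopDHS (fun y => ((g y : ℝ) : ℂ)) (z, t)
          * ZbopDHS (fun y => ((g y : ℝ) : ℂ)) (z, t)) := by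
  have dg : DifferentiableAt ℝ g (z, t) := by
    have h1 : DifferentiableAt ℝ (fun y => ((g y : ℝ) : ℂ)) (z, t) := diffAt_of_on hU hGc hq
    have h2 : g = fun y => ((fun y => ((g y : ℝ) : ℂ)) y).re := by funext y; simp
    rw [h2]; exact (Complex.reCLM.differentiableAt).comp _ h1
  unfold gradSq
  push_cast
  rw [pdxR_slice g dg, pdyR_slice g dg]
  rw [← Dd_ofReal g (z, t) (1, 0), ← Dd_ofReal g (z, t) (Complex.I, 0)]
  unfold ZopDHS ZbopDHS
  linear_combination (DdDHS (Complex.I, 0) (fun y => ((g y : ℝ) : ℂ)) (z, t)) ^ 2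
    * Complex.I_mul_I

lemma lap_slice (hU : IsOpen U) (g : ℂ × ℝ → ℝ)
    (hGc : ContDiffOn ℝ (⊤ : ℕ∞) (fun y => ((g y : ℝ) : ℂ)) U) {z : ℂ} {t : ℝ}
    (hq : (z, t) ∈ U) (hsl : ∀ w : ℂ, (w, t) ∈ U) :
    ((lapR (fun w => g (w, t)) z : ℝ) : ℂ)
      = 4 * ZopDHS (ZbopDHS (fun y => ((g y : ℝ) : ℂ))) (z, t) := by
  have dg : ∀ w : ℂ, DifferentiableAt ℝ g (w, t) := by
    intro w
    have h1 : DifferentiableAt ℝ (fun y => ((g y : ℝ) : ℂ)) (w, t) :=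
      diffAt_of_on hU hGc (hsl w)
    have h2 : g = fun y => ((fun y => ((g y : ℝ) : ℂ)) y).re := by funext y; simp
    rw [h2]; exact (Complex.reCLM.differentiableAt).comp _ h1
  have hg1 : ∀ y, ((fderiv ℝ g y (1, 0) : ℝ) : ℂ) = DdDHS (1, 0) (fun y => ((g y : ℝ) : ℂ)) y :=
    fun y => (Dd_ofReal g y _).symm
  have hg2 : ∀ y, ((fderiv ℝ g y (Complex.I, 0) : ℝ) : ℂ)
      = DdDHS (Complex.I, 0) (fun y => ((g y : ℝ) : ℂ)) y := fun y => (Dd_ofReal g y _).symm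
  have dgx : DifferentiableAt ℝ (fun y => fderiv ℝ g y (1, 0)) (z, t) := by
    have h1 : DifferentiableAt ℝ (DdDHS (1, 0) (fun y => ((g y : ℝ) : ℂ))) (z, t) :=
      diffAt_of_on hU (sm_Dd hU hGc _) hq
    have h2 : (fun y => fderiv ℝ g y (1, 0))
        = fun y => (DdDHS (1, 0) (fun y => ((g y : ℝ) : ℂ)) y).re := by
      funext y; rw [← hg1 y]; simp
    rw [h2]; exact (Complex.reCLM.differentiableAt).comp _ h1
  have dgy : DifferentiableAt ℝ (fun y => fderiv ℝ g y (Complex.I, 0)) (z, t) := by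
    have h1 : DifferentiableAt ℝ (DdDHS (Complex.I, 0) (fun y => ((g y : ℝ) : ℂ))) (z, t) :=
      diffAt_of_on hU (sm_Dd hU hGc _) hq
    have h2 : (fun y => fderiv ℝ g y (Complex.I, 0))
        = fun y => (DdDHS (Complex.I, 0) (fun y => ((g y : ℝ) : ℂ)) y).re := by
      funext y; rw [← hg2 y]; simp
    rw [h2]; exact (Complex.reCLM.differentiableAt).comp _ h1
  have hx1 : pdxR (fun w => g (w, t)) = (fun w => fderiv ℝ g (w, t) (1, 0)) :=
    funext fun w => pdxR_slice g (dg w)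
  have hy1 : pdyR (fun w => g (w, t)) = (fun w => fderiv ℝ g (w, t) (Complex.I, 0)) :=
    funext fun w => pdyR_slice g (dg w)
  have keyx : ((pdxR (pdxR (fun w => g (w, t))) z : ℝ) : ℂ)
      = DdDHS (1, 0) (DdDHS (1, 0) (fun y => ((g y : ℝ) : ℂ))) (z, t) := by
    rw [hx1, pdxR_slice _ dgx, ← Dd_ofReal (fun y => fderiv ℝ g y (1, 0)) (z, t) (1, 0)]
    exact congrFun (congrArg (DdDHS (1, 0)) (funext hg1)) (z, t)
  have keyy : ((pdyR (pdyR (fun w => g (w, t))) z : ℝ) : ℂ)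
      = DdDHS (Complex.I, 0) (DdDHS (Complex.I, 0) (fun y => ((g y : ℝ) : ℂ))) (z, t) := by
    rw [hy1, pdyR_slice _ dgy,
      ← Dd_ofReal (fun y => fderiv ℝ g y (Complex.I, 0)) (z, t) (Complex.I, 0)]
    exact congrFun (congrArg (DdDHS (Complex.I, 0)) (funext hg2)) (z, t)
  unfold lapR
  push_cast
  rw [keyx, keyy]
  have expand : ZopDHS (ZbopDHS (fun y => ((g y : ℝ) : ℂ))) (z, t)
      = ((DdDHS (1, 0) (DdDHS (1, 0) (fun y => ((g y : ℝ) : ℂ))) (z, t)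
          + Complex.I * DdDHS (1, 0) (DdDHS (Complex.I, 0) (fun y => ((g y : ℝ) : ℂ))) (z, t)) / 2
        - Complex.I * ((DdDHS (Complex.I, 0) (DdDHS (1, 0) (fun y => ((g y : ℝ) : ℂ))) (z, t)
          + Complex.I * DdDHS (Complex.I, 0) (DdDHS (Complex.I, 0)
              (fun y => ((g y : ℝ) : ℂ))) (z, t)) / 2)) / 2 := by
    show (DdDHS (1, 0) (ZbopDHS (fun y => ((g y : ℝ) : ℂ))) (z, t)
        - Complex.I * DdDHS (Complex.I, 0) (ZbopDHS (fun y => ((g y : ℝ) : ℂ))) (z, t)) / 2 = _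
    rw [dd_Zbop hU hGc hq, dd_Zbop hU hGc hq]
  rw [expand, Dd_comm hU hGc hq (Complex.I, 0) (1, 0)]
  linear_combination (DdDHS (Complex.I, 0) (DdDHS (Complex.I, 0)
    (fun y => ((g y : ℝ) : ℂ))) (z, t)) * Complex.I_mul_I

end translation
/-- Let `v` be a smooth positive solution of
`∂v/∂t = v·Δv − ‖∇v‖²` on `ℝ² × I`, `I` an open interval. Then the quantity
`Q = v·(∂³v/∂z³)·(∂³v/∂z̄³) = v·|∂³v/∂z³|²` (a real, nonnegative function)
satisfies `∂Q/∂t ≤ v·ΔQ − 4·R·Q` at every point of `ℝ² × I`, where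
`R = v⁻¹(v·Δv − ‖∇v‖²)` and `ΔQ` is the Euclidean Laplacian of `Q` in the `x`
variable. -/
theorem QDHS_differential_inequality (I : Set ℝ) (hI_open : IsOpen I)
    (hI_conn : I.OrdConnected)
    (v : ℂ × ℝ → ℝ)
    (hv_smooth : ContDiffOn ℝ (⊤ : ℕ∞) v (Set.univ ×ˢ I))
    (hv_pos : ∀ p : ℂ × ℝ, p.2 ∈ I → 0 < v p)
    (hv_flow : ∀ p : ℂ × ℝ, p.2 ∈ I →
      deriv (fun s : ℝ => v (p.1, s)) p.2
        = v p * lapR (fun z => v (z, p.2)) p.1 - gradSq (fun z => v (z, p.2)) p.1) :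
    ∀ p : ℂ × ℝ, p.2 ∈ I →
      -- `Q` as defined above agrees with `v·(∂³v/∂z³)·(∂³v/∂z̄³)` and is nonnegative
      ((v p : ℂ) * wz (wz (wz (fun w => (v (w, p.2) : ℂ)))) p.1
          * wzb (wzb (wzb (fun w => (v (w, p.2) : ℂ)))) p.1 = ((QrDHS v p : ℝ) : ℂ)) ∧
      0 ≤ QrDHS v p ∧
      -- the differential inequality `∂Q/∂t ≤ v·ΔQ − 4·R·Q`
      deriv (fun s : ℝ => QrDHS v (p.1, s)) p.2
        ≤ v p * lapR (fun z => QrDHS v (z, p.2)) p.1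
          - 4 * scalarR v p * QrDHS v p := by
  intro p hp
  -- basic setup
  have hU : IsOpen (Set.univ ×ˢ I : Set (ℂ × ℝ)) := isOpen_univ.prod hI_open
  have hqU : p ∈ (Set.univ ×ˢ I : Set (ℂ × ℝ)) := ⟨trivial, hp⟩
  have hsl : ∀ s : ℝ, s ∈ I → ∀ w : ℂ, (w, s) ∈ (Set.univ ×ˢ I : Set (ℂ × ℝ)) :=
    fun s hs w => ⟨trivial, hs⟩
  have hpe : ((p.1, p.2) : ℂ × ℝ) = p := rfl
  -- the complexified solution
  have hVsm : ContDiffOn ℝ (⊤ : ℕ∞) (fun y : ℂ × ℝ => ((v y : ℝ) : ℂ)) (Set.univ ×ˢ I) :=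
    hv_smooth.continuousLinearMap_comp Complex.ofRealCLM
  have hVconj : ∀ x, starRingEnd ℂ ((fun y : ℂ × ℝ => ((v y : ℝ) : ℂ)) x)
      = (fun y : ℂ × ℝ => ((v y : ℝ) : ℂ)) x := fun x => Complex.conj_ofReal _
  have hdv : ∀ x ∈ (Set.univ ×ˢ I : Set (ℂ × ℝ)), DifferentiableAt ℝ v x := by
    intro x hx
    have h1 : DifferentiableAt ℝ (fun y : ℂ × ℝ => ((v y : ℝ) : ℂ)) x :=
      diffAt_of_on hU hVsm hx
    have h2 : v = fun y => ((fun y : ℂ × ℝ => ((v y : ℝ) : ℂ)) y).re := by funext y; simp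
    rw [h2]; exact (Complex.reCLM.differentiableAt).comp _ h1
  -- translation of the flow equation
  have hflowV : ∀ x ∈ (Set.univ ×ˢ I : Set (ℂ × ℝ)),
      TopDHS (fun y : ℂ × ℝ => ((v y : ℝ) : ℂ)) x
        = 4 * ((fun y : ℂ × ℝ => ((v y : ℝ) : ℂ)) x
            * ZopDHS (ZbopDHS (fun y : ℂ × ℝ => ((v y : ℝ) : ℂ))) x
          - ZopDHS (fun y : ℂ × ℝ => ((v y : ℝ) : ℂ)) x
            * ZbopDHS (fun y : ℂ × ℝ => ((v y : ℝ) : ℂ)) x) := by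
    intro x hx
    have e2 : TopDHS (fun y : ℂ × ℝ => ((v y : ℝ) : ℂ)) x
        = ((fderiv ℝ v x (0, 1) : ℝ) : ℂ) := Dd_ofReal v x (0, 1)
    have e1 : deriv (fun s' : ℝ => v (x.1, s')) x.2 = fderiv ℝ v x (0, 1) := by
      have h := (hasDerivAt_slice_t v (hdv (x.1, x.2) hx)).deriv
      exact h
    have hfl := hv_flow x hx.2
    rw [e2, ← e1, hfl]
    push_cast
    rw [lap_slice hU v hVsm (hsl x.2 hx.2 x.1) (hsl x.2 hx.2),
      grad_slice hU v hVsm (hsl x.2 hx.2 x.1)]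
    rw [show ((x.1, x.2) : ℂ × ℝ) = x from rfl]
    ring
  -- slice identities for the third Wirtinger derivatives
  have hwz : ∀ s ∈ I, ∀ w : ℂ,
      wz (wz (wz (fun w' => ((v (w', s) : ℝ) : ℂ)))) w
        = W3DHS (fun y : ℂ × ℝ => ((v y : ℝ) : ℂ)) (w, s) := by
    intro s hs w
    have hfun1 : wz (fun w' => ((v (w', s) : ℝ) : ℂ))
        = fun w' => ZopDHS (fun y : ℂ × ℝ => ((v y : ℝ) : ℂ)) (w', s) :=
      funext fun w' => wz_slice (fun y : ℂ × ℝ => ((v y : ℝ) : ℂ))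
        (diffAt_of_on hU hVsm (hsl s hs w'))
    have hfun2 : wz (fun w' => ZopDHS (fun y : ℂ × ℝ => ((v y : ℝ) : ℂ)) (w', s))
        = fun w' => ZopDHS (ZopDHS (fun y : ℂ × ℝ => ((v y : ℝ) : ℂ))) (w', s) :=
      funext fun w' => wz_slice (ZopDHS (fun y : ℂ × ℝ => ((v y : ℝ) : ℂ)))
        (diffAt_of_on hU (sm_Z hU hVsm) (hsl s hs w'))
    rw [hfun1, hfun2]
    exact wz_slice (ZopDHS (ZopDHS (fun y : ℂ × ℝ => ((v y : ℝ) : ℂ))))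
      (diffAt_of_on hU (sm_Z hU (sm_Z hU hVsm)) (hsl s hs w))
  have hwzb : ∀ s ∈ I, ∀ w : ℂ,
      wzb (wzb (wzb (fun w' => ((v (w', s) : ℝ) : ℂ)))) w
        = ZbopDHS (ZbopDHS (ZbopDHS (fun y : ℂ × ℝ => ((v y : ℝ) : ℂ)))) (w, s) := by
    intro s hs w
    have hfun1 : wzb (fun w' => ((v (w', s) : ℝ) : ℂ))
        = fun w' => ZbopDHS (fun y : ℂ × ℝ => ((v y : ℝ) : ℂ)) (w', s) :=
      funext fun w' => wzb_slice (fun y : ℂ × ℝ => ((v y : ℝ) : ℂ))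
        (diffAt_of_on hU hVsm (hsl s hs w'))
    have hfun2 : wzb (fun w' => ZbopDHS (fun y : ℂ × ℝ => ((v y : ℝ) : ℂ)) (w', s))
        = fun w' => ZbopDHS (ZbopDHS (fun y : ℂ × ℝ => ((v y : ℝ) : ℂ))) (w', s) :=
      funext fun w' => wzb_slice (ZbopDHS (fun y : ℂ × ℝ => ((v y : ℝ) : ℂ)))
        (diffAt_of_on hU (sm_Zb hU hVsm) (hsl s hs w'))
    rw [hfun1, hfun2]
    exact wzb_slice (ZbopDHS (ZbopDHS (fun y : ℂ × ℝ => ((v y : ℝ) : ℂ))))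
      (diffAt_of_on hU (sm_Zb hU (sm_Zb hU hVsm)) (hsl s hs w))
  -- conjugation chain
  have hcV : (fun y : ℂ × ℝ => starRingEnd ℂ ((v y : ℝ) : ℂ))
      = (fun y : ℂ × ℝ => ((v y : ℝ) : ℂ)) := funext fun y => Complex.conj_ofReal _
  have hc1 : (fun y => starRingEnd ℂ (ZopDHS (fun y : ℂ × ℝ => ((v y : ℝ) : ℂ)) y))
      = ZbopDHS (fun y : ℂ × ℝ => ((v y : ℝ) : ℂ)) := by
    funext y; rw [conj_Zop, hcV]
  have hc2 : (fun y => starRingEnd ℂ (ZopDHS (ZopDHS (fun y : ℂ × ℝ => ((v y : ℝ) : ℂ))) y))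
      = ZbopDHS (ZbopDHS (fun y : ℂ × ℝ => ((v y : ℝ) : ℂ))) := by
    funext y; rw [conj_Zop, hc1]
  have hc3 : ∀ y, starRingEnd ℂ (W3DHS (fun y : ℂ × ℝ => ((v y : ℝ) : ℂ)) y)
      = ZbopDHS (ZbopDHS (ZbopDHS (fun y : ℂ × ℝ => ((v y : ℝ) : ℂ)))) y := by
    intro y
    show starRingEnd ℂ (ZopDHS (ZopDHS (ZopDHS (fun y : ℂ × ℝ => ((v y : ℝ) : ℂ)))) y) = _
    rw [conj_Zop, hc2]
  -- Q in complex form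
  have hQrC : ∀ (w : ℂ) (s : ℝ), s ∈ I →
      ((QrDHS v (w, s) : ℝ) : ℂ) = QcDHS (fun y : ℂ × ℝ => ((v y : ℝ) : ℂ)) (w, s) := by
    intro w s hs
    show ((v (w, s) * Complex.normSq
        (wz (wz (wz (fun w' => ((v (w', s) : ℝ) : ℂ)))) w) : ℝ) : ℂ) = _
    push_cast
    rw [hwz s hs w, ← Complex.mul_conj]
    show _ = (fun y : ℂ × ℝ => ((v y : ℝ) : ℂ)) (w, s)
        * W3DHS (fun y : ℂ × ℝ => ((v y : ℝ) : ℂ)) (w, s)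
        * starRingEnd ℂ (W3DHS (fun y : ℂ × ℝ => ((v y : ℝ) : ℂ)) (w, s))
    ring
  -- smoothness of Qc
  have sW3 : ContDiffOn ℝ (⊤ : ℕ∞) (W3DHS (fun y : ℂ × ℝ => ((v y : ℝ) : ℂ)))
      (Set.univ ×ˢ I) := sm_Z hU (sm_Z hU (sm_Z hU hVsm))
  have sWc : ContDiffOn ℝ (⊤ : ℕ∞)
      (fun y => starRingEnd ℂ (W3DHS (fun y : ℂ × ℝ => ((v y : ℝ) : ℂ)) y))
      (Set.univ ×ˢ I) := by
    have := sW3.continuousLinearMap_comp (Complex.conjCLE : ℂ →L[ℝ] ℂ)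
    convert this using 2; rfl
  have sQc : ContDiffOn ℝ (⊤ : ℕ∞) (QcDHS (fun y : ℂ × ℝ => ((v y : ℝ) : ℂ)))
      (Set.univ ×ˢ I) := (hVsm.mul sW3).mul sWc
  have sQrC : ContDiffOn ℝ (⊤ : ℕ∞) (fun y : ℂ × ℝ => ((QrDHS v y : ℝ) : ℂ))
      (Set.univ ×ˢ I) := sQc.congr (fun x hx => hQrC x.1 x.2 hx.2)
  -- first conjunct
  have conj1 : (v p : ℂ) * wz (wz (wz (fun w => (v (w, p.2) : ℂ)))) p.1
      * wzb (wzb (wzb (fun w => (v (w, p.2) : ℂ)))) p.1 = ((QrDHS v p : ℝ) : ℂ) := by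
    rw [hwz p.2 hp p.1, hwzb p.2 hp p.1, ← hc3, hQrC p.1 p.2 hp]
    show _ = (fun y : ℂ × ℝ => ((v y : ℝ) : ℂ)) (p.1, p.2)
        * W3DHS (fun y : ℂ × ℝ => ((v y : ℝ) : ℂ)) (p.1, p.2)
        * starRingEnd ℂ (W3DHS (fun y : ℂ × ℝ => ((v y : ℝ) : ℂ)) (p.1, p.2))
    rfl
  have conj2 : 0 ≤ QrDHS v p :=
    mul_nonneg (hv_pos p hp).le (Complex.normSq_nonneg _)
  refine ⟨conj1, conj2, ?_⟩
  -- master identity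
  obtain ⟨X, Y, hmaster⟩ := master_identity hU hVsm hVconj hflowV hqU
  beta_reduce at hmaster
  have hQrC' : ((QrDHS v p : ℝ) : ℂ) = QcDHS (fun y : ℂ × ℝ => ((v y : ℝ) : ℂ)) p :=
    hQrC p.1 p.2 hp
  -- Laplacian of Q
  have hM : ((lapR (fun z => QrDHS v (z, p.2)) p.1 : ℝ) : ℂ)
      = 4 * ZopDHS (ZbopDHS (QcDHS (fun y : ℂ × ℝ => ((v y : ℝ) : ℂ)))) p := by
    rw [lap_slice hU (QrDHS v) sQrC (hsl p.2 hp p.1) (hsl p.2 hp)]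
    have hcongr : ∀ x ∈ (Set.univ ×ˢ I : Set (ℂ × ℝ)),
        ZbopDHS (fun y : ℂ × ℝ => ((QrDHS v y : ℝ) : ℂ)) x
          = ZbopDHS (QcDHS (fun y : ℂ × ℝ => ((v y : ℝ) : ℂ))) x :=
      fun x hx => Zb_congr hU (fun y hy => hQrC y.1 y.2 hy.2) hx
    rw [show ((p.1, p.2) : ℂ × ℝ) = p from rfl, Z_congr hU hcongr hqU]
  -- scalar curvature numerator
  have hGc : ((v p * lapR (fun z => v (z, p.2)) p.1 - gradSq (fun z => v (z, p.2)) p.1 : ℝ) : ℂ)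
      = 4 * (((v p : ℝ) : ℂ) * ZopDHS (ZbopDHS (fun y : ℂ × ℝ => ((v y : ℝ) : ℂ))) p
        - ZopDHS (fun y : ℂ × ℝ => ((v y : ℝ) : ℂ)) p
          * ZbopDHS (fun y : ℂ × ℝ => ((v y : ℝ) : ℂ)) p) := by
    rw [← hv_flow p hp]
    have e1 : deriv (fun s' : ℝ => v (p.1, s')) p.2 = fderiv ℝ v p (0, 1) :=
      (hasDerivAt_slice_t v (hdv p hqU)).deriv
    rw [e1, ← Dd_ofReal v p (0, 1)]
    exact hflowV p hqU
  -- time derivative of Q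
  have hL : deriv (fun s => QrDHS v (p.1, s)) p.2
      = (TopDHS (QcDHS (fun y : ℂ × ℝ => ((v y : ℝ) : ℂ))) p).re := by
    have hev : (fun s => QrDHS v (p.1, s)) =ᶠ[nhds p.2]
        (fun s => (QcDHS (fun y : ℂ × ℝ => ((v y : ℝ) : ℂ)) (p.1, s)).re) := by
      filter_upwards [hI_open.mem_nhds hp] with s hs
      rw [← hQrC p.1 s hs]
      simp
    rw [hev.deriv_eq]
    have hQt : HasDerivAt (fun s => QcDHS (fun y : ℂ × ℝ => ((v y : ℝ) : ℂ)) (p.1, s))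
        (fderiv ℝ (QcDHS (fun y : ℂ × ℝ => ((v y : ℝ) : ℂ))) (p.1, p.2) (0, 1)) p.2 :=
      hasDerivAt_slice_t _ (diffAt_of_on hU sQc hqU)
    have hre : HasDerivAt
        (fun s => (QcDHS (fun y : ℂ × ℝ => ((v y : ℝ) : ℂ)) (p.1, s)).re)
        ((fderiv ℝ (QcDHS (fun y : ℂ × ℝ => ((v y : ℝ) : ℂ))) (p.1, p.2) (0, 1)).re) p.2 :=
      Complex.reCLM.hasFDerivAt.comp_hasDerivAt p.2 hQt
    rw [hre.deriv]
    rfl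
  -- the key complex identity with explicit real quantities
  have key : ((v p : ℝ) : ℂ) * TopDHS (QcDHS (fun y : ℂ × ℝ => ((v y : ℝ) : ℂ))) p
      = ((v p ^ 2 * lapR (fun z => QrDHS v (z, p.2)) p.1
        - 4 * (v p * lapR (fun z => v (z, p.2)) p.1 - gradSq (fun z => v (z, p.2)) p.1)
            * QrDHS v p
        - 4 * v p * (Complex.normSq X + Complex.normSq Y) : ℝ) : ℂ) := by
    rw [hmaster]
    push_cast
    have hGc2 : ((v p : ℝ) : ℂ) * ((lapR (fun z => v (z, p.2)) p.1 : ℝ) : ℂ)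
        - ((gradSq (fun z => v (z, p.2)) p.1 : ℝ) : ℂ)
        = 4 * (((v p : ℝ) : ℂ) * ZopDHS (ZbopDHS (fun y : ℂ × ℝ => ((v y : ℝ) : ℂ))) p
          - ZopDHS (fun y : ℂ × ℝ => ((v y : ℝ) : ℂ)) p
            * ZbopDHS (fun y : ℂ × ℝ => ((v y : ℝ) : ℂ)) p) := by
      rw [← hGc]; push_cast; ring
    rw [hM, hGc2, hQrC', Complex.mul_conj, Complex.mul_conj]
    ring
  have keyR : v p * (TopDHS (QcDHS (fun y : ℂ × ℝ => ((v y : ℝ) : ℂ))) p).re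
      = v p ^ 2 * lapR (fun z => QrDHS v (z, p.2)) p.1
        - 4 * (v p * lapR (fun z => v (z, p.2)) p.1 - gradSq (fun z => v (z, p.2)) p.1)
            * QrDHS v p
        - 4 * v p * (Complex.normSq X + Complex.normSq Y) := by
    have := congrArg Complex.re key
    simpa [Complex.re_ofReal_mul, ← Complex.ofReal_pow] using this
  -- conclude
  have ha : (0 : ℝ) < v p := hv_pos p hp
  rw [hL]
  show (TopDHS (QcDHS (fun y : ℂ × ℝ => ((v y : ℝ) : ℂ))) p).re
      ≤ v p * lapR (fun z => QrDHS v (z, p.2)) p.1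
        - 4 * ((v p)⁻¹ * (v p * lapR (fun z => v (z, p.2)) p.1
            - gradSq (fun z => v (z, p.2)) p.1)) * QrDHS v p
  have hQre : (TopDHS (QcDHS (fun y : ℂ × ℝ => ((v y : ℝ) : ℂ))) p).re
      = v p * lapR (fun z => QrDHS v (z, p.2)) p.1
        - 4 * ((v p)⁻¹ * (v p * lapR (fun z => v (z, p.2)) p.1
            - gradSq (fun z => v (z, p.2)) p.1)) * QrDHS v p
        - 4 * (Complex.normSq X + Complex.normSq Y) := by
    have h2 : v p * (TopDHS (QcDHS (fun y : ℂ × ℝ => ((v y : ℝ) : ℂ))) p).re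
        = v p * (v p * lapR (fun z => QrDHS v (z, p.2)) p.1
          - 4 * ((v p)⁻¹ * (v p * lapR (fun z => v (z, p.2)) p.1
              - gradSq (fun z => v (z, p.2)) p.1)) * QrDHS v p
          - 4 * (Complex.normSq X + Complex.normSq Y)) := by
      rw [keyR]
      field_simp
    exact mul_left_cancel₀ ha.ne' h2
  rw [hQre]
  have hnn : 0 ≤ 4 * (Complex.normSq X + Complex.normSq Y) := by
    have := Complex.normSq_nonneg X
    have := Complex.normSq_nonneg Y
    linarith
  linarith
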